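/- arXiv:math/0511133 — 2 statements merged into one kernel-verified Lean document; each statement's English description precedes it below -/
import Mathlib

section
/- Let r ≥ 0 and let a_1, ..., a_{2^{r+1}+1} be integers such that the total sum S = a_1 + ... + a_{2^{r+1}+1} satisfies S ≡ 0 (mod 2^{r+1}) and S ≠ 0. Then there exists a nonempty set of indices I which is either a consecutive block {i+1, ..., j} with 1 ≤ i < j ≤ 2^{r+1}+1, or the complement of such a block, such that the sum of a_k over k ∈ I is congruent to 0 mod 2^{r+1} and is nonzero as an integer. -/
theorem stmt_0 (r : ℕ) (a : ℕ → ℤ)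
    (hmod : (2 ^ (r + 1) : ℤ) ∣ ∑ k ∈ Finset.Icc 1 (2 ^ (r + 1) + 1), a k)
    (hne : (∑ k ∈ Finset.Icc 1 (2 ^ (r + 1) + 1), a k) ≠ 0) :
    ∃ (i j : ℕ) (I : Finset ℕ), 1 ≤ i ∧ i < j ∧ j ≤ 2 ^ (r + 1) + 1 ∧
      (I = Finset.Icc (i + 1) j ∨
        I = Finset.Icc 1 (2 ^ (r + 1) + 1) \ Finset.Icc (i + 1) j) ∧
      I.Nonempty ∧
      (2 ^ (r + 1) : ℤ) ∣ (∑ k ∈ I, a k) ∧ (∑ k ∈ I, a k) ≠ 0 := by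
  set N : ℕ := 2 ^ (r + 1) with hN
  have hNpos : 0 < N := pow_pos (by norm_num) _
  haveI : NeZero N := ⟨hNpos.ne'⟩
  -- prefix sums
  set P : ℕ → ℤ := fun i => ∑ k ∈ Finset.Ioc 0 i, a k with hP
  have hcard : Fintype.card (ZMod N) < (Finset.Icc 1 (N + 1)).card := by
    rw [ZMod.card, Nat.card_Icc]
    omega
  obtain ⟨i, hi, j, hj, hij, hfeq⟩ :=
    Finset.exists_ne_map_eq_of_card_lt_of_maps_to hcard
      (f := fun i => ((P i : ZMod N)))
      (fun x _ => Finset.mem_univ _)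
  -- WLOG i < j
  wlog hlt : i < j generalizing i j
  · exact this j hj i hi hij.symm hfeq.symm (by omega)
  simp only [Finset.mem_Icc] at hi hj
  have hdvd : (N : ℤ) ∣ P j - P i := by
    have := (ZMod.intCast_zmod_eq_zero_iff_dvd (P j - P i) N).mp (by push_cast; rw [hfeq]; ring)
    exact this
  have hblock : ∑ k ∈ Finset.Icc (i + 1) j, a k = P j - P i := by
    have : P i + ∑ k ∈ Finset.Ioc i j, a k = P j :=
      Finset.sum_Ioc_consecutive a (Nat.zero_le i) hlt.le
    have hIcc : Finset.Icc (i + 1) j = Finset.Ioc i j := by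
      ext x; simp [Finset.mem_Icc, Finset.mem_Ioc]
    rw [hIcc]; linarith
  have hcastN : ((N : ℤ)) = (2 : ℤ) ^ (r + 1) := by push_cast [hN]; ring
  have hsub : Finset.Icc (i + 1) j ⊆ Finset.Icc 1 (N + 1) := by
    intro x hx; simp only [Finset.mem_Icc] at hx ⊢; omega
  by_cases hBz : P j - P i = 0
  · -- block sum zero: take complement
    refine ⟨i, j, _, hi.1, hlt, hj.2, Or.inr rfl, ?_, ?_, ?_⟩
    · exact ⟨1, by simp only [Finset.mem_sdiff, Finset.mem_Icc]; omega⟩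
    · rw [Finset.sum_sdiff_eq_sub hsub, hblock, hBz, sub_zero]; exact hmod
    · rw [Finset.sum_sdiff_eq_sub hsub, hblock, hBz, sub_zero]; exact hne
  · refine ⟨i, j, _, hi.1, hlt, hj.2, Or.inl rfl, ?_, ?_, ?_⟩
    · exact Finset.nonempty_Icc.mpr (by omega)
    · rw [hblock, ← hcastN]; exact hdvd
    · rw [hblock]; exact hBz
end

section
/- Let n ≥ 2 be even and let a_1, ..., a_n be elements of ℤ/2ℤ with total sum 0. Then the cyclic sequence (a_1, ..., a_n) can be partitioned into at least n/2 nonempty cyclically-consecutive blocks, each summing to 0 in ℤ/2ℤ. In particular, starting from 3·2^{k−1} such elements and iterating block-fusion k−1 times, at least 3 blocks remain. -/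
theorem stmt_11 (n : ℕ) (hn : 2 ≤ n) (hev : Even n) (a : ℕ → ZMod 2)
    (hsum : ∑ i ∈ Finset.range n, a i = 0) :
    (∃ (k t : ℕ) (l : ℕ → ℕ), n / 2 ≤ k ∧ (∀ i < k, 1 ≤ l i) ∧
      (∑ i ∈ Finset.range k, l i) = n ∧
      ∀ i < k, (∑ j ∈ Finset.range (l i),
        a ((t + (∑ i' ∈ Finset.range i, l i') + j) % n)) = 0) ∧
    (∀ k : ℕ, 1 ≤ k → 3 * 2 ^ (k - 1) / 2 ^ (k - 1) = 3) := by
  constructor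
  · -- prefix sums
    set S : ℕ → ZMod 2 := fun i => ∑ j ∈ Finset.range i, a j with hSdef
    have hseg : ∀ s L : ℕ, S (s + L) = S s + ∑ j ∈ Finset.range L, a (s + j) := by
      intro s L
      simp only [hSdef, Finset.sum_range_add]
    -- choose the majority level set of S
    obtain ⟨v, hv⟩ : ∃ v : ZMod 2,
        n / 2 ≤ ((Finset.range n).filter (fun i => S i = v)).card := by
      have h01 := Finset.card_filter_add_card_filter_not
        (s := Finset.range n) (p := fun i => S i = 0)
      have hcong : (Finset.range n).filter (fun i => ¬ S i = 0) =
          (Finset.range n).filter (fun i => S i = 1) := by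
        apply Finset.filter_congr
        intro i _
        constructor
        · intro h; revert h; generalize S i = x; revert x; decide
        · intro h; rw [h]; decide
      rw [hcong] at h01
      simp only [Finset.card_range] at h01
      rcases le_or_gt (n / 2) (((Finset.range n).filter (fun i => S i = 0)).card) with h | h
      · exact ⟨0, h⟩
      · exact ⟨1, by omega⟩
    set P := (Finset.range n).filter (fun i => S i = v) with hPdef
    set k := P.card with hkdef
    have hk1 : 1 ≤ k := le_trans (by omega) hv
    set e := P.orderIsoOfFin rfl with hedef
    set c : ℕ → ℕ := fun i => if h : i < k then (e ⟨i, h⟩ : ℕ) else 0 with hcdef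
    have hcP : ∀ i, i < k → c i ∈ P := by
      intro i hi
      simp only [hcdef, dif_pos hi]
      exact (e ⟨i, hi⟩).2
    have hclt : ∀ i, i < k → c i < n := by
      intro i hi
      have := hcP i hi
      rw [hPdef, Finset.mem_filter, Finset.mem_range] at this
      exact this.1
    have hcv : ∀ i, i < k → S (c i) = v := by
      intro i hi
      have := hcP i hi
      rw [hPdef, Finset.mem_filter] at this
      exact this.2
    have hcmono : ∀ i i', i < i' → i' < k → c i < c i' := by
      intro i i' hii hi'
      have hi : i < k := lt_trans hii hi'
      simp only [hcdef, dif_pos hi, dif_pos hi']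
      exact e.strictMono (show (⟨i, hi⟩ : Fin k) < ⟨i', hi'⟩ from hii)
    have hc0le : ∀ i, i < k → c 0 ≤ c i := by
      intro i hi
      rcases Nat.eq_zero_or_pos i with h | h
      · subst h; exact le_refl _
      · exact le_of_lt (hcmono 0 i h hi)
    set l : ℕ → ℕ := fun i => if i + 1 < k then c (i + 1) - c i else n - c i + c 0
      with hldef
    have hpre : ∀ i, i < k → (∑ i' ∈ Finset.range i, l i') = c i - c 0 := by
      intro i
      induction i with
      | zero => intro _; simp
      | succ m ih =>
        intro hm1
        have hm : m < k := lt_trans (Nat.lt_succ_self m) hm1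
        rw [Finset.sum_range_succ, ih hm]
        have h1 : l m = c (m + 1) - c m := by simp [hldef, hm1]
        have h2 : c m < c (m + 1) := hcmono m (m + 1) (Nat.lt_succ_self m) hm1
        have h3 : c 0 ≤ c m := hc0le m hm
        omega
    -- sums over unwrapped segments
    have hmodsum : ∀ s L : ℕ, s + L ≤ n →
        (∑ j ∈ Finset.range L, a ((s + j) % n)) = ∑ j ∈ Finset.range L, a (s + j) := by
      intro s L hsL
      apply Finset.sum_congr rfl
      intro j hj
      rw [Finset.mem_range] at hj
      rw [Nat.mod_eq_of_lt (by omega)]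
    refine ⟨k, c 0, l, hv, ?_, ?_, ?_⟩
    · intro i hi
      by_cases h : i + 1 < k
      · have := hcmono i (i + 1) (Nat.lt_succ_self i) h
        simp only [hldef, if_pos h]
        omega
      · have := hclt i hi
        simp only [hldef, if_neg h]
        omega
    · have hkk : k = (k - 1) + 1 := by omega
      rw [hkk, Finset.sum_range_succ, hpre (k - 1) (by omega)]
      have h1 : ¬ (k - 1 + 1 < k) := by omega
      have h2 : c (k - 1) < n := hclt (k - 1) (by omega)
      have h3 : c 0 ≤ c (k - 1) := hc0le (k - 1) (by omega)
      simp only [hldef, if_neg h1]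
      omega
    · intro i hi
      rw [hpre i hi]
      have hcc : c 0 + (c i - c 0) = c i := by
        have := hc0le i hi; omega
      rw [hcc]
      by_cases h : i + 1 < k
      · -- interior block
        have hmm : c i < c (i + 1) := hcmono i (i + 1) (Nat.lt_succ_self i) h
        have hlt : c (i + 1) < n := hclt (i + 1) h
        have hli : l i = c (i + 1) - c i := by simp [hldef, h]
        rw [hli, hmodsum _ _ (by omega)]
        have := hseg (c i) (c (i + 1) - c i)
        rw [show c i + (c (i + 1) - c i) = c (i + 1) from by omega] at this
        rw [hcv i hi, hcv (i + 1) h] at this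
        have hfin : v + (∑ j ∈ Finset.range (c (i + 1) - c i), a (c i + j)) = v + 0 := by
          rw [add_zero]; exact this.symm
        exact add_left_cancel hfin
      · -- last, wrapping block
        have hli : l i = (n - c i) + c 0 := by simp [hldef, h]
        have hlt : c i < n := hclt i hi
        have hc0lt : c 0 < n := hclt 0 (by omega)
        rw [hli, Finset.sum_range_add]
        have hpart1 : (∑ j ∈ Finset.range (n - c i), a ((c i + j) % n)) =
            ∑ j ∈ Finset.range (n - c i), a (c i + j) :=
          hmodsum _ _ (by omega)
        have hpart2 : (∑ j ∈ Finset.range (c 0), a ((c i + ((n - c i) + j)) % n)) =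
            ∑ j ∈ Finset.range (c 0), a j := by
          apply Finset.sum_congr rfl
          intro j hj
          rw [Finset.mem_range] at hj
          have : c i + ((n - c i) + j) = n + j := by omega
          rw [this, Nat.add_mod_left, Nat.mod_eq_of_lt (by omega)]
        rw [hpart1, hpart2]
        have hseg1 := hseg (c i) (n - c i)
        rw [show c i + (n - c i) = n from by omega] at hseg1
        have hSn : S n = 0 := hsum
        have hS0 : (∑ j ∈ Finset.range (c 0), a j) = v := hcv 0 (by omega)
        rw [hSn, hcv i hi] at hseg1
        have hfin : v + ((∑ j ∈ Finset.range (n - c i), a (c i + j)) +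
            ∑ j ∈ Finset.range (c 0), a j) = v + 0 := by
          rw [add_zero, ← add_assoc, ← hseg1, hS0, zero_add]
        exact add_left_cancel hfin
  · intro k hk
    exact Nat.mul_div_cancel 3 (pow_pos (by norm_num) (k - 1))
end
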